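/- Let I be a finite totally ordered set and N = {(a, b) ∈ ℕ^I × ℕ^I : ∑ a_i = ∑ b_i}. For each totally ordered subset σ ⊆ I × I (with the product order), the submonoid N_σ ⊆ N generated by {(e_i, e_j) : (i, j) ∈ σ} is a free commutative monoid on the generators (e_i, e_j), (i, j) ∈ σ; i.e., N_σ ≅ ℕ^{|σ|}. -/

import Mathlib

open Finset

private lemma row_eval {I : Type*} [Fintype I] [DecidableEq I] (f : I × I → ℕ) (i : I) :
    (∑ p : I × I, f p • ((Pi.single p.1 1 : I → ℕ), (Pi.single p.2 1 : I → ℕ))).1 i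
      = ∑ p : I × I, (if p.1 = i then f p else 0) := by
  rw [Prod.fst_sum]
  simp [Finset.sum_apply, Pi.single_apply, eq_comm]

private lemma col_eval {I : Type*} [Fintype I] [DecidableEq I] (f : I × I → ℕ) (j : I) :
    (∑ p : I × I, f p • ((Pi.single p.1 1 : I → ℕ), (Pi.single p.2 1 : I → ℕ))).2 j
      = ∑ p : I × I, (if p.2 = j then f p else 0) := by
  rw [Prod.snd_sum]
  simp [Finset.sum_apply, Pi.single_apply, eq_comm]

private lemma cone_aux {I : Type*} [Fintype I] [LinearOrder I] [DecidableEq I] :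
    ∀ (n : ℕ) (f g : I × I → ℕ),
      (∀ p q : I × I, (f p ≠ 0 ∨ g p ≠ 0) → (f q ≠ 0 ∨ g q ≠ 0) → p ≤ q ∨ q ≤ p) →
      (∑ p : I × I, f p • ((Pi.single p.1 1 : I → ℕ), (Pi.single p.2 1 : I → ℕ)) =
        ∑ p : I × I, g p • ((Pi.single p.1 1 : I → ℕ), (Pi.single p.2 1 : I → ℕ))) →
      ∑ p : I × I, f p ≤ n → f = g := by
  intro n
  induction n with
  | zero =>
    intro f g hchain h hle
    have hf0 : ∀ p : I × I, f p = 0 :=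
      fun p => Finset.sum_eq_zero_iff.mp (Nat.le_zero.mp hle) p (mem_univ p)
    have hg0 : ∀ q : I × I, g q = 0 := by
      intro q
      have hr : ∑ p : I × I, (if p.1 = q.1 then f p else 0)
          = ∑ p : I × I, (if p.1 = q.1 then g p else 0) := by
        rw [← row_eval f q.1, ← row_eval g q.1, h]
      have hz : ∑ p : I × I, (if p.1 = q.1 then g p else 0) = 0 := by
        rw [← hr]; exact Finset.sum_eq_zero fun p _ => by simp [hf0 p]
      have := Finset.sum_eq_zero_iff.mp hz q (mem_univ q)
      simpa using this
    funext p; rw [hf0 p, hg0 p]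
  | succ n ih =>
    intro f g hchain h hle
    classical
    by_cases hS : ∃ p : I × I, f p ≠ 0 ∨ g p ≠ 0
    swap
    · push_neg at hS
      funext p
      rw [(hS p).1, (hS p).2]
    · -- the combined support, as a finset
      set S : Finset (I × I) := Finset.univ.filter (fun p => f p ≠ 0 ∨ g p ≠ 0) with hSdef
      have hSne : S.Nonempty := by
        obtain ⟨p, hp⟩ := hS
        exact ⟨p, by simp [hSdef, hp]⟩
      have hmemS : ∀ p, p ∈ S ↔ (f p ≠ 0 ∨ g p ≠ 0) := by
        intro p; simp [hSdef]
      obtain ⟨m, hmS, hmin⟩ : ∃ m ∈ S, ∀ q ∈ S, ¬ q < m := by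
        obtain ⟨m, hm⟩ := Finset.exists_minimal hSne
        exact ⟨m, hm.1, fun q hq hlt => hlt.not_ge (hm.2 hq hlt.le)⟩
      have hmle : ∀ q ∈ S, m ≤ q := by
        intro q hq
        rcases hchain m q ((hmemS m).mp hmS) ((hmemS q).mp hq) with h1 | h1
        · exact h1
        · rcases eq_or_lt_of_le h1 with h2 | h2
          · exact le_of_eq h2.symm
          · exact absurd h2 (hmin q hq)
      -- key dichotomy: row-isolated or column-isolated
      have hdich : (∀ q ∈ S, q.1 = m.1 → q = m) ∨ (∀ q ∈ S, q.2 = m.2 → q = m) := by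
        by_contra hc
        push_neg at hc
        obtain ⟨⟨a, haS, ha1, hane⟩, ⟨b, hbS, hb2, hbne⟩⟩ := hc
        have ham : m ≤ a := hmle a haS
        have hbm : m ≤ b := hmle b hbS
        have ha2 : m.2 < a.2 := by
          rcases lt_or_eq_of_le ham.2 with h' | h'
          · exact h'
          · exact absurd (Prod.ext ha1 h'.symm) hane
        have hb1 : m.1 < b.1 := by
          rcases lt_or_eq_of_le hbm.1 with h' | h'
          · exact h'
          · exact absurd (Prod.ext h'.symm hb2) hbne
        rcases hchain a b ((hmemS a).mp haS) ((hmemS b).mp hbS) with h' | h'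
        · exact absurd h'.2 (by rw [hb2]; exact not_le.mpr ha2)
        · exact absurd h'.1 (by rw [ha1]; exact not_le.mpr hb1)
      -- f m = g m
      have key : f m = g m := by
        rcases hdich with hrow | hcol
        · have hr : ∑ p : I × I, (if p.1 = m.1 then f p else 0)
              = ∑ p : I × I, (if p.1 = m.1 then g p else 0) := by
            rw [← row_eval f m.1, ← row_eval g m.1, h]
          have e1 : ∑ p : I × I, (if p.1 = m.1 then f p else 0) = f m := by
            refine Finset.sum_eq_single_of_mem m (mem_univ m) (fun b _ hb => ?_) |>.trans (by simp)
            by_cases hb1 : b.1 = m.1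
            · simp only [hb1, if_true]
              by_contra hfb
              exact hb (hrow b ((hmemS b).mpr (Or.inl hfb)) hb1)
            · simp [hb1]
          have e2 : ∑ p : I × I, (if p.1 = m.1 then g p else 0) = g m := by
            refine Finset.sum_eq_single_of_mem m (mem_univ m) (fun b _ hb => ?_) |>.trans (by simp)
            by_cases hb1 : b.1 = m.1
            · simp only [hb1, if_true]
              by_contra hgb
              exact hb (hrow b ((hmemS b).mpr (Or.inr hgb)) hb1)
            · simp [hb1]
          rw [← e1, ← e2, hr]
        · have hr : ∑ p : I × I, (if p.2 = m.2 then f p else 0)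
              = ∑ p : I × I, (if p.2 = m.2 then g p else 0) := by
            rw [← col_eval f m.2, ← col_eval g m.2, h]
          have e1 : ∑ p : I × I, (if p.2 = m.2 then f p else 0) = f m := by
            refine Finset.sum_eq_single_of_mem m (mem_univ m) (fun b _ hb => ?_) |>.trans (by simp)
            by_cases hb2 : b.2 = m.2
            · simp only [hb2, if_true]
              by_contra hfb
              exact hb (hcol b ((hmemS b).mpr (Or.inl hfb)) hb2)
            · simp [hb2]
          have e2 : ∑ p : I × I, (if p.2 = m.2 then g p else 0) = g m := by
            refine Finset.sum_eq_single_of_mem m (mem_univ m) (fun b _ hb => ?_) |>.trans (by simp)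
            by_cases hb2 : b.2 = m.2
            · simp only [hb2, if_true]
              by_contra hgb
              exact hb (hcol b ((hmemS b).mpr (Or.inr hgb)) hb2)
            · simp [hb2]
          rw [← e1, ← e2, hr]
      have hfm : f m ≠ 0 := by
        rcases (hmemS m).mp hmS with h' | h'
        · exact h'
        · rw [key]; exact h'
      -- subtract off the m component
      set f' : I × I → ℕ := Function.update f m 0 with hf'def
      set g' : I × I → ℕ := Function.update g m 0 with hg'def
      have hf'ne : ∀ p, f' p ≠ 0 → f p ≠ 0 := by
        intro p hp
        by_cases hpm : p = m
        · simp [hf'def, hpm] at hp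
        · rwa [hf'def, Function.update_of_ne hpm] at hp
      have hg'ne : ∀ p, g' p ≠ 0 → g p ≠ 0 := by
        intro p hp
        by_cases hpm : p = m
        · simp [hg'def, hpm] at hp
        · rwa [hg'def, Function.update_of_ne hpm] at hp
      have hchain' : ∀ p q : I × I, (f' p ≠ 0 ∨ g' p ≠ 0) → (f' q ≠ 0 ∨ g' q ≠ 0) →
          p ≤ q ∨ q ≤ p := by
        intro p q hp hq
        exact hchain p q (hp.imp (hf'ne p) (hg'ne p)) (hq.imp (hf'ne q) (hg'ne q))
      have esum : ∀ (u : I × I → ℕ),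
          ∑ p : I × I, u p • ((Pi.single p.1 1 : I → ℕ), (Pi.single p.2 1 : I → ℕ))
            = u m • ((Pi.single m.1 1 : I → ℕ), (Pi.single m.2 1 : I → ℕ))
              + ∑ p : I × I, (Function.update u m 0) p •
                  ((Pi.single p.1 1 : I → ℕ), (Pi.single p.2 1 : I → ℕ)) := by
        intro u
        rw [← Finset.add_sum_erase Finset.univ _ (mem_univ m),
            ← Finset.add_sum_erase Finset.univ
              (fun p => (Function.update u m 0) p •
                ((Pi.single p.1 1 : I → ℕ), (Pi.single p.2 1 : I → ℕ))) (mem_univ m)]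
        simp only [Function.update_self, zero_smul, zero_add]
        congr 1
        · refine Finset.sum_congr rfl fun p hp => ?_
          rw [Function.update_of_ne (Finset.ne_of_mem_erase hp)]
      have h' : ∑ p : I × I, f' p • ((Pi.single p.1 1 : I → ℕ), (Pi.single p.2 1 : I → ℕ)) =
          ∑ p : I × I, g' p • ((Pi.single p.1 1 : I → ℕ), (Pi.single p.2 1 : I → ℕ)) := by
        have := h
        rw [esum f, esum g, key] at this
        exact add_left_cancel this
      have hle' : ∑ p : I × I, f' p ≤ n := by
        have e3 : f m + ∑ p : I × I, f' p = ∑ p : I × I, f p := by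
          rw [← Finset.add_sum_erase Finset.univ f (mem_univ m),
              ← Finset.add_sum_erase Finset.univ f' (mem_univ m)]
          simp only [hf'def, Function.update_self, zero_add]
          congr 1
          exact Finset.sum_congr rfl fun p hp =>
            (Function.update_of_ne (Finset.ne_of_mem_erase hp) _ _)
        have h4 : f m + ∑ p : I × I, f' p ≤ n + 1 := e3 ▸ hle
        omega
      have hfg' := ih f' g' hchain' h' hle'
      funext p
      by_cases hpm : p = m
      · rw [hpm]; exact key
      · have := congrFun hfg' p
        rwa [hf'def, hg'def, Function.update_of_ne hpm, Function.update_of_ne hpm] at this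

/-- for each totally ordered subset `σ ⊆ I × I` (product order), the
submonoid `N_σ` generated by `{(e_i, e_j) : (i,j) ∈ σ}` is free on these generators:
representations as `ℕ`-linear combinations of the generators are unique. -/
theorem totally_ordered_cone_free
    (I : Type*) [Fintype I] [LinearOrder I] [DecidableEq I]
    (σ : Set (I × I)) (hσ : ∀ p ∈ σ, ∀ q ∈ σ, p ≤ q ∨ q ≤ p)
    (f g : I × I → ℕ)
    (hf : ∀ p, f p ≠ 0 → p ∈ σ) (hg : ∀ p, g p ≠ 0 → p ∈ σ)
    (h : ∑ p : I × I, f p •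
          ((Pi.single p.1 1 : I → ℕ), (Pi.single p.2 1 : I → ℕ)) =
        ∑ p : I × I, g p •
          ((Pi.single p.1 1 : I → ℕ), (Pi.single p.2 1 : I → ℕ))) :
    f = g := by
  refine cone_aux (∑ p : I × I, f p) f g ?_ h le_rfl
  intro p q hp hq
  exact hσ p (hp.elim (hf p) (hg p)) q (hq.elim (hf q) (hg q))
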